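/- Given constants 0 < μ ≤ M, L > 0 and c > 0, the stepsize constant φ = 2μ(μ − r̲)²/(L(M + μ)) − 2r̲(μ − r̲)/L is strictly positive. -/
import Mathlib


theorem danla_phi_pos (μ M L c : ℝ) (hμ : 0 < μ) (hμM : μ ≤ M) (hL : 0 < L) (hc : 0 < c)
    (Mc r φ : ℝ) (hMc : Mc = M + c)
    (hr : r = (Real.sqrt (Mc ^ 2 + 3 * μ ^ 2) - Mc) / 3)
    (hφ : φ = 2 * μ * (μ - r) ^ 2 / (L * (M + μ)) - 2 * r * (μ - r) / L) :
    0 < φ := by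
  set s := Real.sqrt (Mc ^ 2 + 3 * μ ^ 2) with hs
  have hs0 : 0 ≤ s := Real.sqrt_nonneg _
  have hs2 : s ^ 2 = Mc ^ 2 + 3 * μ ^ 2 := by
    rw [hs]
    exact Real.sq_sqrt (by positivity)
  have hMc0 : 0 < Mc := by rw [hMc]; linarith
  -- s > Mc
  have hsMc : Mc < s := by nlinarith [sq_nonneg (s - Mc), sq_nonneg (s + Mc)]
  have hr0 : 0 < r := by rw [hr]; linarith
  -- s + Mc > M + 2μ
  have hkey : M + 2 * μ < s + Mc := by nlinarith [sq_nonneg (s + (2 * μ - c))]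
  -- r * (s + Mc) = μ²
  have hrmu : r * (s + Mc) = μ ^ 2 := by rw [hr]; nlinarith
  have h1 : r * (M + 2 * μ) < μ ^ 2 := by nlinarith
  have h2 : r < μ := by nlinarith
  have hMμ : 0 < M + μ := by linarith
  have hform : φ = 2 * (μ - r) * (μ ^ 2 - r * (M + 2 * μ)) / (L * (M + μ)) := by
    rw [hφ]
    rw [div_sub_div _ _ (by positivity) hL.ne', div_eq_div_iff (by positivity) (by positivity)]
    ring
  rw [hform]
  apply div_pos
  · nlinarith
  · positivity
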